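/- arXiv:1611.04551 — 3 statements merged into one kernel-verified Lean document; each statement's English description precedes it below -/
import Mathlib

section
/- Let T_Ising = diag(1, e^{πi/8}, −1) and T_{SU(2)₂} = diag(1, e^{3πi/8}, −1) as 3×3 complex matrices. For every integer a ≥ 0, setting m = 4a + 2: if 2a+1 ≡ 1 (mod 8) or 2a+1 ≡ 7 (mod 8), then |Tr(T_Ising^m)| = √(5 + 2√2); and if 2a+1 ≡ 3 (mod 8) or 2a+1 ≡ 5 (mod 8), then |Tr(T_Ising^m)| = √(5 − 2√2). -/
open Matrix Complex

noncomputable def TIsing : Matrix (Fin 3) (Fin 3) ℂ :=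
  Matrix.diagonal ![1, Complex.exp (Real.pi * Complex.I / 8), -1]

lemma habs' (x : ℝ) : ‖2 + Complex.exp (x * Complex.I)‖ = Real.sqrt (5 + 4 * Real.cos x) := by
  rw [Complex.exp_mul_I]
  have : (2 : ℂ) + (Complex.cos x + Complex.sin x * Complex.I)
      = ((2 + Real.cos x : ℝ) : ℂ) + ((Real.sin x : ℝ) : ℂ) * Complex.I := by
    push_cast [Complex.ofReal_cos, Complex.ofReal_sin]; ring
  rw [this, Complex.norm_add_mul_I]
  congr 1
  nlinarith [Real.sin_sq_add_cos_sq x]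

lemma hexp' (a : ℕ) : Complex.exp (Real.pi * Complex.I / 8) ^ (4*a+2)
    = Complex.exp (((((2*a+1) % 8 : ℕ) * (Real.pi / 4) : ℝ) : ℂ) * Complex.I) := by
  rw [← Complex.exp_nat_mul]
  have h : (2*a+1) = 8 * ((2*a+1)/8) + (2*a+1) % 8 := (Nat.div_add_mod _ 8).symm
  rw [show ((4*a+2 : ℕ) : ℂ) * (Real.pi * Complex.I / 8)
      = ((2*a+1 : ℕ) : ℂ) * (Real.pi / 4) * Complex.I by push_cast; ring]
  calc Complex.exp (((2*a+1 : ℕ) : ℂ) * (Real.pi / 4) * Complex.I)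
      = Complex.exp (((2*a+1)/8 : ℕ) * (2 * Real.pi * Complex.I) + ((((2*a+1) % 8 : ℕ) * (Real.pi/4) : ℝ) : ℂ) * Complex.I) := by
        congr 1
        conv_lhs => rw [h]
        push_cast; ring
    _ = _ := by rw [Complex.exp_add, Complex.exp_nat_mul_two_pi_mul_I, one_mul]

lemma htr (a : ℕ) : Matrix.trace (TIsing ^ (4*a+2))
    = 2 + Complex.exp (((((2*a+1) % 8 : ℕ) * (Real.pi / 4) : ℝ) : ℂ) * Complex.I) := by
  have h1 : Matrix.trace (TIsing ^ (4*a+2))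
      = 1 + Complex.exp (Real.pi * Complex.I / 8) ^ (4*a+2) + (-1 : ℂ)^(4*a+2) := by
    rw [TIsing, Matrix.diagonal_pow, Matrix.trace_diagonal]
    simp [Fin.sum_univ_three]
  rw [h1, hexp', Even.neg_one_pow ⟨2*a+1, by ring⟩]
  ring

theorem abs_trace_TIsing_pow (a : ℕ) (m : ℕ) (hm : m = 4 * a + 2) :
    (((2 * a + 1) % 8 = 1 ∨ (2 * a + 1) % 8 = 7) →
      ‖Matrix.trace (TIsing ^ m)‖ = Real.sqrt (5 + 2 * Real.sqrt 2)) ∧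
    (((2 * a + 1) % 8 = 3 ∨ (2 * a + 1) % 8 = 5) →
      ‖Matrix.trace (TIsing ^ m)‖ = Real.sqrt (5 - 2 * Real.sqrt 2)) := by
  subst hm
  rw [htr a, habs']
  have c1 := Real.cos_pi_div_four
  constructor
  · rintro (h | h) <;> rw [h]
    · norm_num [c1]; ring_nf
    · rw [show ((7:ℕ):ℝ) * (Real.pi/4) = 2 * Real.pi - Real.pi/4 by push_cast; ring,
        Real.cos_two_pi_sub, c1]
      ring_nf
  · rintro (h | h) <;> rw [h]
    · rw [show ((3:ℕ):ℝ) * (Real.pi/4) = Real.pi - Real.pi/4 by push_cast; ring,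
        Real.cos_pi_sub, c1]
      ring_nf
    · rw [show ((5:ℕ):ℝ) * (Real.pi/4) = Real.pi/4 + Real.pi by push_cast; ring,
        Real.cos_add_pi, c1]
      ring_nf
end

section
/- Let m₁, m₂, m₃, n₁, n₂, n₃ be non-negative integers with m₁ + m₂ + m₃ = n₁ + n₂ + n₃ = s, and set pᵢ = s − mᵢ − nᵢ ∈ ℤ for i = 1, 2, 3. Then there exists an admissible 6-tuple for (m₁, n₁, m₂, n₂, m₃, n₃) — that is, non-negative integers (x, y, a, b, u, v) with x + v = m₁, y + u = n₁, a + y = m₂, x + b = n₂, b + u = m₃, a + v = n₃ — if and only if p₁ ≥ 0, p₂ ≥ 0, and p₃ ≥ 0. -/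
theorem admissible_tuple_exists_iff
    (m₁ m₂ m₃ n₁ n₂ n₃ s : ℕ)
    (hm : m₁ + m₂ + m₃ = s) (hn : n₁ + n₂ + n₃ = s)
    (p₁ p₂ p₃ : ℤ)
    (hp₁ : p₁ = (s : ℤ) - m₁ - n₁) (hp₂ : p₂ = (s : ℤ) - m₂ - n₂)
    (hp₃ : p₃ = (s : ℤ) - m₃ - n₃) :
    (∃ x y a b u v : ℕ,
      x + v = m₁ ∧ y + u = n₁ ∧ a + y = m₂ ∧ x + b = n₂ ∧ b + u = m₃ ∧ a + v = n₃)
      ↔ (0 ≤ p₁ ∧ 0 ≤ p₂ ∧ 0 ≤ p₃) := by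
  constructor
  · rintro ⟨x, y, a, b, u, v, h1, h2, h3, h4, h5, h6⟩
    omega
  · rintro ⟨q1, q2, q3⟩
    refine ⟨max (m₁ - n₃) (n₂ - m₃),
      m₁ + m₂ - n₃ - max (m₁ - n₃) (n₂ - m₃),
      max (m₁ - n₃) (n₂ - m₃) + n₃ - m₁,
      n₂ - max (m₁ - n₃) (n₂ - m₃),
      max (m₁ - n₃) (n₂ - m₃) + m₃ - n₂,
      m₁ - max (m₁ - n₃) (n₂ - m₃), ?_, ?_, ?_, ?_, ?_, ?_⟩ <;> omega
end

section
/- Let m₁, m₂, m₃, n₁, n₂, n₃ be non-negative integers with m₁ + m₂ + m₃ = n₁ + n₂ + n₃ = s, set pᵢ = s − mᵢ − nᵢ for i = 1, 2, 3, and assume p₁ ≥ 0, p₂ ≥ 0, p₃ ≥ 0. Then the number of admissible 6-tuples for (m₁, n₁, m₂, n₂, m₃, n₃) — tuples of non-negative integers (x, y, a, b, u, v) with x + v = m₁, y + u = n₁, a + y = m₂, x + b = n₂, b + u = m₃, a + v = n₃ — is exactly min(m₁, m₂, m₃, n₁, n₂, n₃, p₁, p₂, p₃) + 1. -/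
private lemma admissible_aux_min (m₁ m₂ m₃ n₁ n₂ n₃ p₁ p₂ p₃ : ℕ) :
    ∃ M, M ≤ m₁ ∧ M ≤ m₂ ∧ M ≤ m₃ ∧ M ≤ n₁ ∧ M ≤ n₂ ∧ M ≤ n₃ ∧
      M ≤ p₁ ∧ M ≤ p₂ ∧ M ≤ p₃ ∧
      (M = m₁ ∨ M = m₂ ∨ M = m₃ ∨ M = n₁ ∨ M = n₂ ∨ M = n₃ ∨
        M = p₁ ∨ M = p₂ ∨ M = p₃) ∧
      min m₁ (min m₂ (min m₃ (min n₁ (min n₂ (min n₃ (min p₁ (min p₂ p₃))))))) = M := by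
  refine ⟨min m₁ (min m₂ (min m₃ (min n₁ (min n₂ (min n₃ (min p₁ (min p₂ p₃))))))),
    min_le_left _ _, ?_, ?_, ?_, ?_, ?_, ?_, ?_, ?_, ?_, rfl⟩
  · exact (min_le_right _ _).trans (min_le_left _ _)
  · exact (min_le_right _ _).trans ((min_le_right _ _).trans (min_le_left _ _))
  · exact (min_le_right _ _).trans ((min_le_right _ _).trans
      ((min_le_right _ _).trans (min_le_left _ _)))
  · exact (min_le_right _ _).trans ((min_le_right _ _).trans
      ((min_le_right _ _).trans ((min_le_right _ _).trans (min_le_left _ _))))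
  · exact (min_le_right _ _).trans ((min_le_right _ _).trans
      ((min_le_right _ _).trans ((min_le_right _ _).trans
      ((min_le_right _ _).trans (min_le_left _ _)))))
  · exact (min_le_right _ _).trans ((min_le_right _ _).trans
      ((min_le_right _ _).trans ((min_le_right _ _).trans
      ((min_le_right _ _).trans ((min_le_right _ _).trans (min_le_left _ _))))))
  · exact (min_le_right _ _).trans ((min_le_right _ _).trans
      ((min_le_right _ _).trans ((min_le_right _ _).trans
      ((min_le_right _ _).trans ((min_le_right _ _).trans
      ((min_le_right _ _).trans (min_le_left _ _)))))))
  · exact (min_le_right _ _).trans ((min_le_right _ _).trans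
      ((min_le_right _ _).trans ((min_le_right _ _).trans
      ((min_le_right _ _).trans ((min_le_right _ _).trans
      ((min_le_right _ _).trans (min_le_right _ _)))))))
  · -- the 9-way disjunction, built bottom-up
    have c8 : min p₂ p₃ = p₂ ∨ min p₂ p₃ = p₃ := min_choice _ _
    have c7 : min p₁ (min p₂ p₃) = p₁ ∨ min p₁ (min p₂ p₃) = p₂ ∨
        min p₁ (min p₂ p₃) = p₃ := by
      rcases min_choice p₁ (min p₂ p₃) with h | h
      · exact Or.inl h
      · rw [h]; exact Or.inr c8
    have c6 : min n₃ (min p₁ (min p₂ p₃)) = n₃ ∨ min n₃ (min p₁ (min p₂ p₃)) = p₁ ∨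
        min n₃ (min p₁ (min p₂ p₃)) = p₂ ∨ min n₃ (min p₁ (min p₂ p₃)) = p₃ := by
      rcases min_choice n₃ (min p₁ (min p₂ p₃)) with h | h
      · exact Or.inl h
      · rw [h]; exact Or.inr c7
    have c5 : ∀ z, z = min n₂ (min n₃ (min p₁ (min p₂ p₃))) →
        z = n₂ ∨ z = n₃ ∨ z = p₁ ∨ z = p₂ ∨ z = p₃ := by
      intro z hz
      rcases min_choice n₂ (min n₃ (min p₁ (min p₂ p₃))) with h | h
      · exact Or.inl (hz.trans h)
      · rw [hz, h]; exact Or.inr c6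
    have c4 : ∀ z, z = min n₁ (min n₂ (min n₃ (min p₁ (min p₂ p₃)))) →
        z = n₁ ∨ z = n₂ ∨ z = n₃ ∨ z = p₁ ∨ z = p₂ ∨ z = p₃ := by
      intro z hz
      rcases min_choice n₁ (min n₂ (min n₃ (min p₁ (min p₂ p₃)))) with h | h
      · exact Or.inl (hz.trans h)
      · exact Or.inr (c5 z (hz.trans h))
    have c3 : ∀ z, z = min m₃ (min n₁ (min n₂ (min n₃ (min p₁ (min p₂ p₃))))) →
        z = m₃ ∨ z = n₁ ∨ z = n₂ ∨ z = n₃ ∨ z = p₁ ∨ z = p₂ ∨ z = p₃ := by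
      intro z hz
      rcases min_choice m₃ (min n₁ (min n₂ (min n₃ (min p₁ (min p₂ p₃))))) with h | h
      · exact Or.inl (hz.trans h)
      · exact Or.inr (c4 z (hz.trans h))
    have c2 : ∀ z, z = min m₂ (min m₃ (min n₁ (min n₂ (min n₃ (min p₁ (min p₂ p₃)))))) →
        z = m₂ ∨ z = m₃ ∨ z = n₁ ∨ z = n₂ ∨ z = n₃ ∨ z = p₁ ∨ z = p₂ ∨ z = p₃ := by
      intro z hz
      rcases min_choice m₂ (min m₃ (min n₁ (min n₂ (min n₃ (min p₁ (min p₂ p₃)))))) with h | h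
      · exact Or.inl (hz.trans h)
      · exact Or.inr (c3 z (hz.trans h))
    rcases min_choice m₁ (min m₂ (min m₃ (min n₁ (min n₂ (min n₃ (min p₁ (min p₂ p₃))))))) with
      h | h
    · exact Or.inl h
    · exact Or.inr (c2 _ h)

private lemma admissible_aux_L (m₁ m₃ n₂ n₃ : ℕ) :
    ∃ L, n₂ ≤ L + m₃ ∧ m₁ ≤ L + n₃ ∧ (L = n₂ - m₃ ∨ L = m₁ - n₃) := by
  refine ⟨max (n₂ - m₃) (m₁ - n₃), ?_, ?_, max_choice _ _⟩
  · have := le_max_left (n₂ - m₃) (m₁ - n₃); omega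
  · have := le_max_right (n₂ - m₃) (m₁ - n₃); omega

private lemma admissible_aux_mem
    (m₁ m₂ m₃ n₁ n₂ n₃ s : ℕ)
    (hm : m₁ + m₂ + m₃ = s) (hn : n₁ + n₂ + n₃ = s)
    (p₁ p₂ p₃ : ℕ)
    (hp₁ : m₁ + n₁ + p₁ = s) (hp₂ : m₂ + n₂ + p₂ = s) (hp₃ : m₃ + n₃ + p₃ = s)
    (M : ℕ)
    (h1 : M ≤ m₁) (h2 : M ≤ m₂) (h3 : M ≤ m₃) (h4 : M ≤ n₁) (h5 : M ≤ n₂) (h6 : M ≤ n₃)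
    (h7 : M ≤ p₁) (h8 : M ≤ p₂) (h9 : M ≤ p₃)
    (L : ℕ) (hLa : n₂ ≤ L + m₃) (hLb : m₁ ≤ L + n₃) (hLor : L = n₂ - m₃ ∨ L = m₁ - n₃)
    (j : ℕ) (hj : j < M + 1) :
    (L + j) + (m₁ - (L + j)) = m₁ ∧
    ((n₁ + n₂) - (m₃ + (L + j))) + ((L + j) + m₃ - n₂) = n₁ ∧
    (n₃ + (L + j) - m₁) + ((n₁ + n₂) - (m₃ + (L + j))) = m₂ ∧
    (L + j) + (n₂ - (L + j)) = n₂ ∧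
    (n₂ - (L + j)) + ((L + j) + m₃ - n₂) = m₃ ∧
    (n₃ + (L + j) - m₁) + (m₁ - (L + j)) = n₃ := by
  refine ⟨?_, ?_, ?_, ?_, ?_, ?_⟩ <;> omega

private lemma admissible_aux_lt
    (m₁ m₂ m₃ n₁ n₂ n₃ s : ℕ)
    (hm : m₁ + m₂ + m₃ = s) (hn : n₁ + n₂ + n₃ = s)
    (p₁ p₂ p₃ : ℕ)
    (hp₁ : m₁ + n₁ + p₁ = s) (hp₂ : m₂ + n₂ + p₂ = s) (hp₃ : m₃ + n₃ + p₃ = s)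
    (M : ℕ)
    (hor : M = m₁ ∨ M = m₂ ∨ M = m₃ ∨ M = n₁ ∨ M = n₂ ∨ M = n₃ ∨
      M = p₁ ∨ M = p₂ ∨ M = p₃)
    (L : ℕ) (hLa : n₂ ≤ L + m₃) (hLb : m₁ ≤ L + n₃)
    (x y a b u v : ℕ)
    (q1 : x + v = m₁) (q2 : y + u = n₁) (q3 : a + y = m₂)
    (q4 : x + b = n₂) (q5 : b + u = m₃) (q6 : a + v = n₃) :
    x - L < M + 1 := by
  omega

private lemma admissible_aux_eq
    (m₁ m₂ m₃ n₁ n₂ n₃ s : ℕ)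
    (hm : m₁ + m₂ + m₃ = s) (hn : n₁ + n₂ + n₃ = s)
    (p₁ p₂ p₃ : ℕ)
    (hp₁ : m₁ + n₁ + p₁ = s) (hp₂ : m₂ + n₂ + p₂ = s) (hp₃ : m₃ + n₃ + p₃ = s)
    (L : ℕ) (hLor : L = n₂ - m₃ ∨ L = m₁ - n₃)
    (x y a b u v : ℕ)
    (q1 : x + v = m₁) (q2 : y + u = n₁) (q3 : a + y = m₂)
    (q4 : x + b = n₂) (q5 : b + u = m₃) (q6 : a + v = n₃) :
    ((L + (x - L), (n₁ + n₂) - (m₃ + (L + (x - L))), n₃ + (L + (x - L)) - m₁,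
      n₂ - (L + (x - L)), (L + (x - L)) + m₃ - n₂, m₁ - (L + (x - L))) :
      ℕ × ℕ × ℕ × ℕ × ℕ × ℕ) = (x, y, a, b, u, v) := by
  have hLx : L ≤ x := by omega
  simp only [Prod.mk.injEq]
  refine ⟨?_, ?_, ?_, ?_, ?_, ?_⟩ <;> omega

set_option maxHeartbeats 1000000 in
private lemma admissible_aux_key
    (m₁ m₂ m₃ n₁ n₂ n₃ s : ℕ)
    (hm : m₁ + m₂ + m₃ = s) (hn : n₁ + n₂ + n₃ = s)
    (p₁ p₂ p₃ : ℕ)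
    (hp₁ : m₁ + n₁ + p₁ = s) (hp₂ : m₂ + n₂ + p₂ = s) (hp₃ : m₃ + n₃ + p₃ = s)
    (M : ℕ)
    (h1 : M ≤ m₁) (h2 : M ≤ m₂) (h3 : M ≤ m₃) (h4 : M ≤ n₁) (h5 : M ≤ n₂) (h6 : M ≤ n₃)
    (h7 : M ≤ p₁) (h8 : M ≤ p₂) (h9 : M ≤ p₃)
    (hor : M = m₁ ∨ M = m₂ ∨ M = m₃ ∨ M = n₁ ∨ M = n₂ ∨ M = n₃ ∨
      M = p₁ ∨ M = p₂ ∨ M = p₃)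
    (L : ℕ) (hLa : n₂ ≤ L + m₃) (hLb : m₁ ≤ L + n₃) (hLor : L = n₂ - m₃ ∨ L = m₁ - n₃) :
    Nat.card (Fin (M + 1)) = Nat.card {t : ℕ × ℕ × ℕ × ℕ × ℕ × ℕ //
        t.1 + t.2.2.2.2.2 = m₁ ∧ t.2.1 + t.2.2.2.2.1 = n₁ ∧
        t.2.2.1 + t.2.1 = m₂ ∧ t.1 + t.2.2.2.1 = n₂ ∧
        t.2.2.2.1 + t.2.2.2.2.1 = m₃ ∧ t.2.2.1 + t.2.2.2.2.2 = n₃} := by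
  refine Nat.card_eq_of_bijective
    (fun k : Fin (M + 1) =>
      ⟨(L + k.1, (n₁ + n₂) - (m₃ + (L + k.1)), n₃ + (L + k.1) - m₁,
        n₂ - (L + k.1), (L + k.1) + m₃ - n₂, m₁ - (L + k.1)),
        admissible_aux_mem m₁ m₂ m₃ n₁ n₂ n₃ s hm hn p₁ p₂ p₃ hp₁ hp₂ hp₃ M
          h1 h2 h3 h4 h5 h6 h7 h8 h9 L hLa hLb hLor k.1 k.2⟩)
    ⟨fun k₁ k₂ h => ?_, fun t => ?_⟩
  · have h' := congrArg (fun t => t.val.1) h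
    dsimp only at h'
    exact Fin.ext (by omega)
  · obtain ⟨⟨x, y, a, b, u, v⟩, q1, q2, q3, q4, q5, q6⟩ := t
    exact ⟨⟨x - L, admissible_aux_lt m₁ m₂ m₃ n₁ n₂ n₃ s hm hn p₁ p₂ p₃ hp₁ hp₂ hp₃ M
        hor L hLa hLb x y a b u v q1 q2 q3 q4 q5 q6⟩,
      Subtype.ext (admissible_aux_eq m₁ m₂ m₃ n₁ n₂ n₃ s hm hn p₁ p₂ p₃ hp₁ hp₂ hp₃
        L hLor x y a b u v q1 q2 q3 q4 q5 q6)⟩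

theorem admissible_tuple_count
    (m₁ m₂ m₃ n₁ n₂ n₃ s : ℕ)
    (hm : m₁ + m₂ + m₃ = s) (hn : n₁ + n₂ + n₃ = s)
    (p₁ p₂ p₃ : ℕ)
    (hp₁ : m₁ + n₁ + p₁ = s) (hp₂ : m₂ + n₂ + p₂ = s) (hp₃ : m₃ + n₃ + p₃ = s) :
    Nat.card {t : ℕ × ℕ × ℕ × ℕ × ℕ × ℕ //
        t.1 + t.2.2.2.2.2 = m₁ ∧ t.2.1 + t.2.2.2.2.1 = n₁ ∧
        t.2.2.1 + t.2.1 = m₂ ∧ t.1 + t.2.2.2.1 = n₂ ∧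
        t.2.2.2.1 + t.2.2.2.2.1 = m₃ ∧ t.2.2.1 + t.2.2.2.2.2 = n₃} =
      min m₁ (min m₂ (min m₃ (min n₁ (min n₂ (min n₃ (min p₁ (min p₂ p₃))))))) + 1 := by
  obtain ⟨M, h1, h2, h3, h4, h5, h6, h7, h8, h9, hor, hMeq⟩ :=
    admissible_aux_min m₁ m₂ m₃ n₁ n₂ n₃ p₁ p₂ p₃
  obtain ⟨L, hLa, hLb, hLor⟩ := admissible_aux_L m₁ m₃ n₂ n₃
  rw [hMeq]
  rw [← admissible_aux_key m₁ m₂ m₃ n₁ n₂ n₃ s hm hn p₁ p₂ p₃ hp₁ hp₂ hp₃ M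
    h1 h2 h3 h4 h5 h6 h7 h8 h9 hor L hLa hLb hLor,
    Nat.card_eq_fintype_card, Fintype.card_fin]
end
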